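/- Let C be a cycle of π and let t be the largest integer r with |E_r ∩ C| > b (with t = 0 if |C| ≤ b). If a best b-staircase from some element i ∈ C exists, then its size equals t; in particular, all best b-staircases of elements of C have the same size. -/
import Mathlib


attribute [local instance] Classical.propDecidable

variable {n : ℕ}

/-- The first element of `E` encountered strictly after `x` when following `π` along its cycle
(`x` itself if no element of `E` is reachable).  For `E = E_r` this is the map `π_r`. -/
noncomputable def nextIn (π : Equiv.Perm (Fin n)) (E : Finset (Fin n)) (x : Fin n) : Fin n :=
  if h : ∃ k, 0 < k ∧ (⇑π)^[k] x ∈ E then (⇑π)^[Nat.find h] x else x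

/-- `b`-fold iteration of `nextIn`; for `E = E_r` this is `π_r^b`. -/
noncomputable def stepB (π : Equiv.Perm (Fin n)) (b : ℕ) (E : Finset (Fin n)) (x : Fin n) :
    Fin n :=
  (nextIn π E)^[b] x

/-- `level π b r` is the set `E_{r+1}` (0-indexed): `level π b 0 = E_1 = [n]`, and `E_{r+1}`
consists of the elements `i` of `E_r` with `i < π_r^k(i)` for all `k ∈ {−b,…,b} \ {0}`. -/
noncomputable def level (π : Equiv.Perm (Fin n)) (b : ℕ) : ℕ → Finset (Fin n)
  | 0 => Finset.univ
  | r + 1 =>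
    (level π b r).filter fun i =>
      (∀ k ∈ Finset.Icc 1 b, i < (nextIn π (level π b r))^[k] i) ∧
      (∀ k ∈ Finset.Icc 1 b, i < (nextIn π⁻¹ (level π b r))^[k] i)

/-- The cycle of `π` containing `x`, as a finset. -/
def cycleOfF (π : Equiv.Perm (Fin n)) (x : Fin n) : Finset (Fin n) :=
  (Finset.range n).image fun k => (⇑π)^[k] x

/-- `iSeq π b i k` is the element `i_{k+1}` of the `b`-staircase from `i`:
`i_1 = i` and `i_{k+1} = π_k^b(i_k)`. -/
noncomputable def iSeq (π : Equiv.Perm (Fin n)) (b : ℕ) (i : Fin n) : ℕ → Fin n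
  | 0 => i
  | k + 1 => stepB π b (level π b k) (iSeq π b i k)

/-- `jSeq π b r m q` is the element `j_{r+1-q}` of the descending part of the `b`-staircase of
size `r` with middle `m`: `j_{r+1} = m` and `j_k = π_k^b(j_{k+1})`. -/
noncomputable def jSeq (π : Equiv.Perm (Fin n)) (b : ℕ) (r : ℕ) (m : Fin n) : ℕ → Fin n
  | 0 => m
  | q + 1 => stepB π b (level π b (r - (q + 1))) (jSeq π b r m q)

/-- The sequence `(i = i_1, …, i_{r+1} = m = j_{r+1}, j_r, …, j_1 = i')` is a `b`-staircase of
size `r` from `i`: `i_k, j_k ∈ E_k` for all `k ∈ [r+1]`. -/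
def IsStaircase (π : Equiv.Perm (Fin n)) (b r : ℕ) (i : Fin n) : Prop :=
  ∀ k ≤ r, iSeq π b i k ∈ level π b k ∧
    jSeq π b r (iSeq π b i r) k ∈ level π b (r - k)

/-- An almost `b`-staircase of size `r` from `i`: membership `i_k, j_k ∈ E_k` is required only
for `k ∈ [r]`. -/
def IsAlmost (π : Equiv.Perm (Fin n)) (b r : ℕ) (i : Fin n) : Prop :=
  (∀ k < r, iSeq π b i k ∈ level π b k) ∧
  (∀ q, 1 ≤ q → q ≤ r → jSeq π b r (iSeq π b i r) q ∈ level π b (r - q))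

/-- The `b`-staircase of size `r` from `i` is the best `b`-staircase from `i`: there is no
proper (i.e. with `|E_{r+1} ∩ C| > b`, where `C` is the cycle of `i`) almost `b`-staircase of
size `r+1` from `i`. -/
def IsBest (π : Equiv.Perm (Fin n)) (b r : ℕ) (i : Fin n) : Prop :=
  IsStaircase π b r i ∧
    ¬ (IsAlmost π b (r + 1) i ∧ b < ((level π b r) ∩ cycleOfF π i).card)

/-- Fich et al.'s (`b = 1`) notion: the staircase of size `r` from `i` is the best staircase
from `i`, where an almost staircase of size `r+1` is proper iff `i_{r+1} ≠ m'` (its middle). -/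
def IsBest1 (π : Equiv.Perm (Fin n)) (r : ℕ) (i : Fin n) : Prop :=
  IsStaircase π 1 r i ∧
    ¬ (IsAlmost π 1 (r + 1) i ∧ iSeq π 1 i r ≠ iSeq π 1 i (r + 1))

lemma exists_period (π : Equiv.Perm (Fin n)) (x : Fin n) :
    ∃ p, 0 < p ∧ p ≤ n ∧ (⇑π)^[p] x = x := by
  have hn : 0 < n := x.pos
  have hcard : Fintype.card (Fin n) < Fintype.card (Fin (n+1)) := by simp
  obtain ⟨a, c, hne, heq⟩ :=
    Fintype.exists_ne_map_eq_of_card_lt (fun j : Fin (n+1) => (⇑π)^[j.1] x) hcard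
  rcases hne.lt_or_gt with h | h
  · refine ⟨c.1 - a.1, by omega, by omega, ?_⟩
    have := Function.Injective.iterate π.injective a.1
    apply this
    rw [← Function.iterate_add_apply]
    have : a.1 + (c.1 - a.1) = c.1 := by omega
    rw [this, heq]
  · refine ⟨a.1 - c.1, by omega, by omega, ?_⟩
    have := Function.Injective.iterate π.injective c.1
    apply this
    rw [← Function.iterate_add_apply]
    have : c.1 + (a.1 - c.1) = a.1 := by omega
    rw [this, heq]

lemma iterate_mul_period (π : Equiv.Perm (Fin n)) (x : Fin n) {p : ℕ}
    (hp : (⇑π)^[p] x = x) (q : ℕ) : (⇑π)^[p * q] x = x := by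
  induction q with
  | zero => simp
  | succ q ih =>
    have : p * (q + 1) = p + p * q := by ring
    rw [this, Function.iterate_add_apply, ih, hp]

lemma iterate_mem_cycleOfF (π : Equiv.Perm (Fin n)) (x : Fin n) (m : ℕ) :
    (⇑π)^[m] x ∈ cycleOfF π x := by
  obtain ⟨p, hp0, hpn, hp⟩ := exists_period π x
  have hmod : (⇑π)^[m] x = (⇑π)^[m % p] x := by
    conv_lhs => rw [← Nat.div_add_mod m p]
    rw [Nat.add_comm, Function.iterate_add_apply, iterate_mul_period π x hp]
  rw [hmod]
  exact Finset.mem_image.2 ⟨m % p, Finset.mem_range.2 (lt_of_lt_of_le (Nat.mod_lt m hp0) hpn), rfl⟩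

lemma mem_cycleOfF_self (π : Equiv.Perm (Fin n)) (x : Fin n) : x ∈ cycleOfF π x :=
  iterate_mem_cycleOfF π x 0

lemma cycleOfF_inv (π : Equiv.Perm (Fin n)) (x : Fin n) {z : Fin n}
    (hz : z ∈ cycleOfF π x) : π z ∈ cycleOfF π x := by
  obtain ⟨k, -, rfl⟩ := Finset.mem_image.1 hz
  have : π ((⇑π)^[k] x) = (⇑π)^[k+1] x := (Function.iterate_succ_apply' _ _ _).symm
  rw [this]; exact iterate_mem_cycleOfF π x _

lemma cycleOfF_inv' (π : Equiv.Perm (Fin n)) (x : Fin n) {z : Fin n}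
    (hz : z ∈ cycleOfF π x) : π⁻¹ z ∈ cycleOfF π x := by
  obtain ⟨k, -, rfl⟩ := Finset.mem_image.1 hz
  obtain ⟨p, hp0, hpn, hp⟩ := exists_period π x
  have h1 : (⇑π)^[k] x = (⇑π)^[k + p] x := by
    rw [Function.iterate_add_apply, hp]
  have h2 : (⇑π)^[k + p] x = π ((⇑π)^[k + p - 1] x) := by
    have h3 : k + p = (k + p - 1) + 1 := by omega
    conv_lhs => rw [h3]
    rw [Function.iterate_succ_apply']
  have : π⁻¹ ((⇑π)^[k] x) = (⇑π)^[k + p - 1] x := by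
    rw [h1, h2]; simp
  rw [this]; exact iterate_mem_cycleOfF π x _

lemma cycleOfF_reach (π : Equiv.Perm (Fin n)) (x : Fin n) {y e : Fin n}
    (hy : y ∈ cycleOfF π x) (he : e ∈ cycleOfF π x) :
    ∃ k, 0 < k ∧ (⇑π)^[k] y = e := by
  obtain ⟨a, ha, rfl⟩ := Finset.mem_image.1 hy
  obtain ⟨c, hc, rfl⟩ := Finset.mem_image.1 he
  obtain ⟨p, hp0, hpn, hp⟩ := exists_period π x
  have ha' : a < n := Finset.mem_range.1 ha
  have hpn' : n ≤ p * n := Nat.le_mul_of_pos_left n hp0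
  refine ⟨c + p * n - a, by omega, ?_⟩
  rw [← Function.iterate_add_apply]
  have : c + p * n - a + a = c + p * n := by omega
  rw [this, Function.iterate_add_apply, iterate_mul_period π x hp]

lemma cycleOfF_eq_of_mem (π : Equiv.Perm (Fin n)) (x : Fin n) {i : Fin n}
    (hi : i ∈ cycleOfF π x) : cycleOfF π i = cycleOfF π x := by
  apply Finset.Subset.antisymm
  · intro z hz
    obtain ⟨k, -, rfl⟩ := Finset.mem_image.1 hz
    obtain ⟨a, -, rfl⟩ := Finset.mem_image.1 hi
    rw [← Function.iterate_add_apply]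
    exact iterate_mem_cycleOfF π x _
  · intro z hz
    obtain ⟨k, hk, hke⟩ := cycleOfF_reach π x hi hz
    rw [← hke]
    exact iterate_mem_cycleOfF π i _

lemma iterate_inv (f : Fin n → Fin n) (C : Finset (Fin n)) (h : ∀ z ∈ C, f z ∈ C)
    (m : ℕ) {z : Fin n} (hz : z ∈ C) : f^[m] z ∈ C := by
  induction m with
  | zero => exact hz
  | succ m ih => rw [Function.iterate_succ_apply']; exact h _ ih

lemma nextIn_stay (σ : Equiv.Perm (Fin n)) (E C : Finset (Fin n))
    (hinv : ∀ z ∈ C, σ z ∈ C) {y : Fin n} (hy : y ∈ C) : nextIn σ E y ∈ C := by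
  rw [nextIn]
  split
  · exact iterate_inv _ _ hinv _ hy
  · exact hy

lemma nextIn_mem (π : Equiv.Perm (Fin n)) (x : Fin n) (E : Finset (Fin n))
    {y e : Fin n} (hy : y ∈ cycleOfF π x) (heE : e ∈ E) (heC : e ∈ cycleOfF π x) :
    nextIn π E y ∈ E ∧ nextIn π E y ∈ cycleOfF π x := by
  have h : ∃ k, 0 < k ∧ (⇑π)^[k] y ∈ E := by
    obtain ⟨k, hk, hke⟩ := cycleOfF_reach π x hy heC
    exact ⟨k, hk, by rw [hke]; exact heE⟩
  rw [nextIn, dif_pos h]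
  exact ⟨(Nat.find_spec h).2,
    iterate_inv _ _ (fun z hz => cycleOfF_inv π x hz) _ hy⟩

lemma nextIn_leftInv (π : Equiv.Perm (Fin n)) (x : Fin n) (E : Finset (Fin n))
    {e : Fin n} (heE : e ∈ E) (heC : e ∈ cycleOfF π x) :
    nextIn π⁻¹ E (nextIn π E e) = e := by
  have h : ∃ k, 0 < k ∧ (⇑π)^[k] e ∈ E := by
    obtain ⟨k, hk, hke⟩ := cycleOfF_reach π x heC heC
    exact ⟨k, hk, by rw [hke]; exact heE⟩
  have hfe : nextIn π E e = (⇑π)^[Nat.find h] e := by rw [nextIn, dif_pos h]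
  set d := Nat.find h with hd
  have hd0 : 0 < d := (Nat.find_spec h).1
  have hkey : ∀ j ≤ d, (⇑π⁻¹)^[j] ((⇑π)^[d] e) = (⇑π)^[d - j] e := by
    intro j hj
    have h1 : (⇑π)^[d] e = (⇑π)^[j] ((⇑π)^[d - j] e) := by
      rw [← Function.iterate_add_apply]
      congr 1
      omega
    rw [h1]
    have hli : Function.LeftInverse (⇑π⁻¹) (⇑π) := fun z => by simp
    exact hli.iterate j _
  have h' : ∃ k, 0 < k ∧ (⇑π⁻¹)^[k] (nextIn π E e) ∈ E := by
    refine ⟨d, hd0, ?_⟩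
    rw [hfe, hkey d le_rfl]
    simpa using heE
  have hup : Nat.find h' ≤ d :=
    Nat.find_min' h' ⟨hd0, by rw [hfe, hkey d le_rfl]; simpa using heE⟩
  have hlow : d ≤ Nat.find h' := by
    rw [Nat.le_find_iff]
    rintro k hk ⟨hk0, hkmem⟩
    rw [hfe, hkey k (le_of_lt hk)] at hkmem
    exact Nat.find_min h (show d - k < d by omega) ⟨by omega, hkmem⟩
  have hdd : Nat.find h' = d := le_antisymm hup hlow
  rw [show nextIn π⁻¹ E (nextIn π E e) = (⇑π⁻¹)^[Nat.find h'] (nextIn π E e) from by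
    rw [nextIn, dif_pos h']]
  rw [hdd, hfe, hkey d le_rfl]
  simp

lemma nextIn_iter_mem (π : Equiv.Perm (Fin n)) (x : Fin n) (E : Finset (Fin n))
    (j : ℕ) {z : Fin n} (hzE : z ∈ E) (hzC : z ∈ cycleOfF π x) :
    (nextIn π E)^[j] z ∈ E ∧ (nextIn π E)^[j] z ∈ cycleOfF π x := by
  induction j with
  | zero => exact ⟨hzE, hzC⟩
  | succ j ih =>
    rw [Function.iterate_succ_apply']
    exact nextIn_mem π x E ih.2 hzE hzC

lemma nextIn_leftInv_iter (π : Equiv.Perm (Fin n)) (x : Fin n) (E : Finset (Fin n))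
    (j : ℕ) {z : Fin n} (hzE : z ∈ E) (hzC : z ∈ cycleOfF π x) :
    (nextIn π⁻¹ E)^[j] ((nextIn π E)^[j] z) = z := by
  induction j with
  | zero => rfl
  | succ j ih =>
    rw [Function.iterate_succ_apply' (nextIn π E), Function.iterate_succ_apply (nextIn π⁻¹ E)]
    have hm := nextIn_iter_mem π x E j hzE hzC
    rw [nextIn_leftInv π x E hm.1 hm.2]
    exact ih


lemma level_succ_subset (π : Equiv.Perm (Fin n)) (b s : ℕ) :
    level π b (s + 1) ⊆ level π b s := by
  intro z hz
  unfold level at hz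
  simp only [Finset.mem_filter] at hz
  exact hz.1

lemma level_antitone (π : Equiv.Perm (Fin n)) (b : ℕ) {s u : ℕ} (h : s ≤ u) :
    level π b u ⊆ level π b s := by
  induction u with
  | zero =>
    have : s = 0 := by omega
    subst this
    exact subset_rfl
  | succ u ih =>
    rcases Nat.eq_or_lt_of_le h with h' | h'
    · rw [h']
    · exact Finset.Subset.trans (level_succ_subset π b u) (ih (by omega))

lemma level_succ_empty (π : Equiv.Perm (Fin n)) (x : Fin n) (b : ℕ) (hb : 1 ≤ b) (s : ℕ)
    (hcard : ((level π b s) ∩ cycleOfF π x).card ≤ b)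
    {y : Fin n} (hy : y ∈ level π b (s + 1)) (hyC : y ∈ cycleOfF π x) : False := by
  unfold level at hy
  simp only [Finset.mem_filter] at hy
  obtain ⟨hyE, hy2, -⟩ := hy
  set E := level π b s with hE
  set F := nextIn π E with hF
  have hmaps : ∀ j ∈ Finset.range (b + 1), F^[j] y ∈ E ∩ cycleOfF π x := by
    intro j _
    have := nextIn_iter_mem π x E j hyE hyC
    exact Finset.mem_inter.2 this
  obtain ⟨j1, hj1, j2, hj2, hne, heq⟩ :=
    Finset.exists_ne_map_eq_of_card_lt_of_maps_to
      (show (E ∩ cycleOfF π x).card < (Finset.range (b + 1)).card by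
        rw [Finset.card_range]; omega) hmaps
  have key : ∀ j1 j2 : ℕ, j1 < j2 → j2 < b + 1 → F^[j1] y = F^[j2] y → False := by
    intro j1 j2 hlt hj2b heq
    have e1 : (nextIn π⁻¹ E)^[j1] (F^[j1] y) = y := nextIn_leftInv_iter π x E j1 hyE hyC
    have hw := nextIn_iter_mem π x E (j2 - j1) hyE hyC
    have hsplit : F^[j2] y = F^[j1] (F^[j2 - j1] y) := by
      rw [← Function.iterate_add_apply]
      congr 1
      omega
    have e2 : (nextIn π⁻¹ E)^[j1] (F^[j2] y) = F^[j2 - j1] y := by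
      rw [hsplit]
      exact nextIn_leftInv_iter π x E j1 hw.1 hw.2
    have hyy : y = F^[j2 - j1] y := by
      calc y = (nextIn π⁻¹ E)^[j1] (F^[j1] y) := e1.symm
      _ = (nextIn π⁻¹ E)^[j1] (F^[j2] y) := by rw [heq]
      _ = F^[j2 - j1] y := e2
    have hlt2 : y < F^[j2 - j1] y := hy2 (j2 - j1) (Finset.mem_Icc.2 ⟨by omega, by omega⟩)
    rw [← hyy] at hlt2
    exact lt_irrefl y hlt2
  rcases hne.lt_or_gt with h | h
  · exact key j1 j2 h (Finset.mem_range.1 hj2) heq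
  · exact key j2 j1 h (Finset.mem_range.1 hj1) heq.symm

lemma iSeq_mem_cycle (π : Equiv.Perm (Fin n)) (b : ℕ) (i : Fin n) (k : ℕ) :
    iSeq π b i k ∈ cycleOfF π i := by
  induction k with
  | zero => exact mem_cycleOfF_self π i
  | succ k ih =>
    show stepB π b (level π b k) (iSeq π b i k) ∈ _
    exact iterate_inv _ _ (fun z hz => nextIn_stay π _ _ (fun w hw => cycleOfF_inv π i hw) hz)
      b ih

lemma stepB_mem (π : Equiv.Perm (Fin n)) (x : Fin n) (b : ℕ) (hb : 1 ≤ b)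
    (E : Finset (Fin n)) {y e : Fin n} (hy : y ∈ cycleOfF π x) (heE : e ∈ E)
    (heC : e ∈ cycleOfF π x) : stepB π b E y ∈ E ∧ stepB π b E y ∈ cycleOfF π x := by
  have h1 := nextIn_mem π x E hy heE heC
  have hbe : b = (b - 1) + 1 := by omega
  rw [stepB, hbe, Function.iterate_succ_apply]
  exact nextIn_iter_mem π x E (b - 1) h1.1 h1.2


/-- Let `C` be a cycle of `π` and `t` the largest `r` with `|E_r ∩ C| > b`
(`t = 0` if `|C| ≤ b`; `E_r = level π b (r-1)`, 0-indexed).  If a best `b`-staircase of size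
`r` from some `i ∈ C` exists, then `r = t`; in particular all best `b`-staircases of elements
of `C` have the same size. -/
theorem best_staircase_size_eq (n b : ℕ) (hb : 1 ≤ b) (π : Equiv.Perm (Fin n))
    (x : Fin n) (C : Finset (Fin n)) (hC : C = cycleOfF π x)
    (t : ℕ)
    (ht0 : C.card ≤ b → t = 0)
    (ht1 : t ≠ 0 → b < ((level π b (t - 1)) ∩ C).card)
    (ht2 : ∀ r, t < r → ¬ b < ((level π b (r - 1)) ∩ C).card)
    (i : Fin n) (hi : i ∈ C) (r : ℕ) (hbest : IsBest π b r i) :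
    r = t := by
  have hD : C = cycleOfF π i := by
    rw [hC]
    exact (cycleOfF_eq_of_mem π x (by rwa [hC] at hi)).symm
  have h1 : ¬ t < r := by
    intro hlt
    have hcard : ((level π b (r - 1)) ∩ C).card ≤ b := not_lt.1 (ht2 r hlt)
    have hy := (hbest.1 r le_rfl).1
    have hyC : iSeq π b i r ∈ cycleOfF π i := iSeq_mem_cycle π b i r
    have hre : r = (r - 1) + 1 := by omega
    rw [hre] at hy hyC
    exact level_succ_empty π i b hb (r - 1) (by rwa [hD] at hcard) hy hyC
  have h2 : ¬ r < t := by
    intro hlt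
    have ht1' := ht1 (by omega)
    have hsub : level π b (t - 1) ⊆ level π b r := level_antitone π b (by omega)
    have hcard : b < ((level π b r) ∩ C).card :=
      lt_of_lt_of_le ht1' (Finset.card_le_card (Finset.inter_subset_inter hsub subset_rfl))
    obtain ⟨e, he⟩ := Finset.card_pos.1 (show 0 < ((level π b r) ∩ C).card by omega)
    have heE : e ∈ level π b r := (Finset.mem_inter.1 he).1
    have heC : e ∈ cycleOfF π i := by
      have := (Finset.mem_inter.1 he).2
      rwa [hD] at this
    apply hbest.2
    refine ⟨⟨fun k hk => (hbest.1 k (by omega)).1, ?_⟩, by rw [← hD]; exact hcard⟩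
    have hm' : iSeq π b i (r + 1) ∈ level π b r ∧ iSeq π b i (r + 1) ∈ cycleOfF π i := by
      show stepB π b (level π b r) (iSeq π b i r) ∈ _ ∧ _
      exact stepB_mem π i b hb _ (iSeq_mem_cycle π b i r) heE heC
    have claim : ∀ q, q ≤ r + 1 →
        jSeq π b (r + 1) (iSeq π b i (r + 1)) q ∈ cycleOfF π i ∧
        (1 ≤ q → jSeq π b (r + 1) (iSeq π b i (r + 1)) q ∈ level π b (r + 1 - q)) := by
      intro q
      induction q with
      | zero => exact fun _ => ⟨hm'.2, fun h => absurd h (by omega)⟩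
      | succ q ih =>
        intro hq
        have ihq := ih (by omega)
        have hsub2 : level π b r ⊆ level π b ((r + 1) - (q + 1)) :=
          level_antitone π b (by omega)
        have hst := stepB_mem π i b hb (level π b ((r + 1) - (q + 1))) ihq.1
          (hsub2 heE) heC
        exact ⟨hst.2, fun _ => hst.1⟩
    exact fun q hq1 hq2 => (claim q hq2).2 hq1
  omega
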